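/- Let F be a field in which every irreducible polynomial in F[x] has degree at most 2 (as holds for every real closed field), and let G be an additive subgroup of ℚ that is not cyclic. Then the group algebra F[G] is an antimatter domain: F[G] is an integral domain with no irreducible elements. -/

import Mathlib

open AddMonoidAlgebra Polynomial


section MulApply

variable {A : Type*} [AddCommMonoid A] [LinearOrder A] [IsOrderedCancelAddMonoid A] {F : Type*} [Semiring F]

private lemma aux_mul_apply_max (f g : AddMonoidAlgebra F A) {a b : A}
    (ha : ∀ x ∈ f.coeff.support, x ≤ a) (hb : ∀ y ∈ g.coeff.support, y ≤ b) :
    (f * g).coeff (a + b) = f.coeff a * g.coeff b := by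
  classical
  rw [AddMonoidAlgebra.mul_apply]
  unfold Finsupp.sum
  rw [Finset.sum_eq_single a]
  · dsimp only
    rw [Finset.sum_eq_single b]
    · rw [if_pos rfl]
    · intro y hy hyb
      exact if_neg fun he => (add_lt_add_right (lt_of_le_of_ne (hb y hy) hyb) a).ne he
    · intro h
      rw [if_pos rfl, Finsupp.notMem_support_iff.1 h, mul_zero]
  · intro x hx hxa
    refine Finset.sum_eq_zero fun y hy => if_neg fun he => ?_
    exact (add_lt_add_of_lt_of_le (lt_of_le_of_ne (ha x hx) hxa) (hb y hy)).ne he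
  · intro h
    refine Finset.sum_eq_zero fun y _ => ?_
    rw [Finsupp.notMem_support_iff.1 h]
    simp

private lemma aux_mul_apply_min (f g : AddMonoidAlgebra F A) {a b : A}
    (ha : ∀ x ∈ f.coeff.support, a ≤ x) (hb : ∀ y ∈ g.coeff.support, b ≤ y) :
    (f * g).coeff (a + b) = f.coeff a * g.coeff b := by
  classical
  rw [AddMonoidAlgebra.mul_apply]
  unfold Finsupp.sum
  rw [Finset.sum_eq_single a]
  · dsimp only
    rw [Finset.sum_eq_single b]
    · rw [if_pos rfl]
    · intro y hy hyb
      exact if_neg fun he => (add_lt_add_right (lt_of_le_of_ne (hb y hy) (Ne.symm hyb)) a).ne' he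
    · intro h
      rw [if_pos rfl, Finsupp.notMem_support_iff.1 h, mul_zero]
  · intro x hx hxa
    refine Finset.sum_eq_zero fun y hy => if_neg fun he => ?_
    exact (add_lt_add_of_lt_of_le (lt_of_le_of_ne (ha x hx) (Ne.symm hxa)) (hb y hy)).ne' he
  · intro h
    refine Finset.sum_eq_zero fun y _ => ?_
    rw [Finsupp.notMem_support_iff.1 h]
    simp

private lemma aux_not_isUnit [NoZeroDivisors F] [Nontrivial F]
    {v : AddMonoidAlgebra F A} {x y : A}
    (hx : x ∈ v.coeff.support) (hy : y ∈ v.coeff.support) (hxy : x ≠ y) : ¬ IsUnit v := by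
  intro hv
  obtain ⟨w, hw⟩ := hv.exists_right_inv
  have hvne : v.coeff.support.Nonempty := ⟨x, hx⟩
  have hwne : w.coeff.support.Nonempty := by
    rw [Finsupp.support_nonempty_iff, Ne, AddMonoidAlgebra.coeff_eq_zero]
    rintro rfl
    rw [mul_zero] at hw
    exact one_ne_zero hw.symm
  set a := v.coeff.support.max' hvne with hadef
  set a' := v.coeff.support.min' hvne with ha'def
  set b := w.coeff.support.max' hwne with hbdef
  set b' := w.coeff.support.min' hwne with hb'def
  have h1 : (v * w).coeff (a + b) = v.coeff a * w.coeff b :=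
    aux_mul_apply_max v w (fun z hz => Finset.le_max' _ _ hz) (fun z hz => Finset.le_max' _ _ hz)
  have h2 : (v * w).coeff (a' + b') = v.coeff a' * w.coeff b' :=
    aux_mul_apply_min v w (fun z hz => Finset.min'_le _ _ hz) (fun z hz => Finset.min'_le _ _ hz)
  have hva : v.coeff a ≠ 0 := Finsupp.mem_support_iff.1 (v.coeff.support.max'_mem hvne)
  have hva' : v.coeff a' ≠ 0 := Finsupp.mem_support_iff.1 (v.coeff.support.min'_mem hvne)
  have hwb : w.coeff b ≠ 0 := Finsupp.mem_support_iff.1 (w.coeff.support.max'_mem hwne)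
  have hwb' : w.coeff b' ≠ 0 := Finsupp.mem_support_iff.1 (w.coeff.support.min'_mem hwne)
  have e1 : a + b = 0 := by
    by_contra hne
    rw [hw, AddMonoidAlgebra.one_def, AddMonoidAlgebra.coeff_single, Finsupp.single_eq_of_ne' (Ne.symm hne)] at h1
    exact mul_ne_zero hva hwb h1.symm
  have e2 : a' + b' = 0 := by
    by_contra hne
    rw [hw, AddMonoidAlgebra.one_def, AddMonoidAlgebra.coeff_single, Finsupp.single_eq_of_ne' (Ne.symm hne)] at h2
    exact mul_ne_zero hva' hwb' h2.symm
  have hlt : a' + b' < a + b :=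
    add_lt_add_of_lt_of_le (Finset.min'_lt_max' _ hx hy hxy)
      (Finset.min'_le _ _ (w.coeff.support.max'_mem hwne))
  rw [e1, e2] at hlt
  exact lt_irrefl _ hlt

end MulApply

private lemma aux_bezout (x y : ℚ) (hx : x ≠ 0) :
    ∃ r : ℚ, r ≠ 0 ∧ (∃ u v : ℤ, r = u * x + v * y) ∧
      (∃ m : ℤ, x = m * r) ∧ (∃ m : ℤ, y = m * r) := by
  set A : ℤ := x.num * y.den with hAdef
  set B : ℤ := y.num * x.den with hBdef
  set N : ℤ := (x.den : ℤ) * (y.den : ℤ) with hNdef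
  have hN0 : (N : ℚ) ≠ 0 := by
    have := x.den_nz
    have := y.den_nz
    simp only [hNdef]
    push_cast
    positivity
  have hA : (A : ℚ) = x * N := by
    simp only [hAdef, hNdef]
    push_cast
    rw [← mul_assoc, Rat.mul_den_eq_num]
  have hB : (B : ℚ) = y * N := by
    simp only [hBdef, hNdef]
    push_cast
    rw [mul_comm (x.den : ℚ) (y.den : ℚ), ← mul_assoc, Rat.mul_den_eq_num]
  have hA0 : A ≠ 0 := by
    apply mul_ne_zero (Rat.num_ne_zero.2 hx)
    exact_mod_cast y.den_nz
  set d : ℕ := A.gcd B with hddef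
  have hd0 : (d : ℚ) ≠ 0 := by
    have : A.gcd B ≠ 0 := fun h => hA0 (Int.gcd_eq_zero_iff.1 h).1
    exact_mod_cast this
  refine ⟨(d : ℚ) / N, div_ne_zero hd0 hN0, ⟨A.gcdA B, A.gcdB B, ?_⟩, ?_, ?_⟩
  · have hbez : ((d : ℤ) : ℚ) = (A : ℚ) * (A.gcdA B : ℚ) + (B : ℚ) * (A.gcdB B : ℚ) := by
      exact_mod_cast congrArg (fun z : ℤ => (z : ℚ)) (Int.gcd_eq_gcd_ab A B)
    rw [show ((d:ℤ):ℚ) = (d:ℚ) by push_cast; ring] at hbez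
    rw [hA, hB] at hbez
    field_simp [hbez]
    linear_combination hbez
  · obtain ⟨m, hm⟩ := Int.gcd_dvd_left (a := A) (b := B)
    refine ⟨m, ?_⟩
    have : (A : ℚ) = (d : ℚ) * (m : ℚ) := by exact_mod_cast congrArg (fun z : ℤ => (z : ℚ)) hm
    rw [hA] at this
    field_simp
    linarith [this]
  · obtain ⟨m, hm⟩ := Int.gcd_dvd_right (a := A) (b := B)
    refine ⟨m, ?_⟩
    have : (B : ℚ) = (d : ℚ) * (m : ℚ) := by exact_mod_cast congrArg (fun z : ℤ => (z : ℚ)) hm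
    rw [hB] at this
    field_simp
    linarith [this]


private lemma aux_div {G : AddSubgroup ℚ} (hG : ¬ IsAddCyclic G) :
    ∀ q : ℚ, q ∈ G → q ≠ 0 → ∃ r : ℚ, r ∈ G ∧ r ≠ 0 ∧ ∃ m : ℤ, q = m * r ∧ 2 ≤ |m| := by
  intro q hq hq0
  have hnc : ¬ Function.Surjective fun m : ℤ => m • (⟨q, hq⟩ : G) := fun h => hG ⟨⟨_, h⟩⟩
  rw [Function.Surjective] at hnc
  push_neg at hnc
  obtain ⟨y, hy⟩ := hnc
  have hy' : ∀ m : ℤ, m * q ≠ (y : ℚ) := by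
    intro m hm
    apply hy m
    apply Subtype.ext
    rw [← hm]
    push_cast
    rw [zsmul_eq_mul]
  obtain ⟨r, hr0, ⟨u, v, huv⟩, ⟨mx, hmx⟩, ⟨my, hmy⟩⟩ := aux_bezout q (y : ℚ) hq0
  have hrG : r ∈ G := by
    rw [huv]
    refine AddSubgroup.add_mem G ?_ ?_
    · simpa [zsmul_eq_mul] using G.zsmul_mem hq u
    · simpa [zsmul_eq_mul] using G.zsmul_mem y.2 v
  refine ⟨r, hrG, hr0, mx, hmx, ?_⟩
  by_contra h
  push_neg at h
  rw [abs_lt] at h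
  have hmx0 : mx ≠ 0 := by
    rintro rfl
    rw [Int.cast_zero, zero_mul] at hmx
    exact hq0 hmx
  have : mx = 1 ∨ mx = -1 := by omega
  rcases this with rfl | rfl
  · rw [Int.cast_one, one_mul] at hmx
    exact hy' my (by rw [hmx]; exact hmy.symm)
  · have hrq : r = -q := by rw [hmx]; push_cast; ring
    exact hy' (-my) (by rw [hmy, hrq]; push_cast; ring)

private lemma aux_gcd_finset {G : AddSubgroup ℚ} (S : Finset ℚ) (hS : ∀ s ∈ S, s ∈ G) :
    ∃ r : ℚ, r ∈ G ∧ ((∃ s ∈ S, s ≠ 0) → r ≠ 0) ∧ ∀ s ∈ S, ∃ m : ℤ, s = m * r := by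
  classical
  induction S using Finset.induction_on with
  | empty => exact ⟨0, G.zero_mem, by rintro ⟨s, hs, -⟩; simp at hs, by simp⟩
  | @insert a S' ha IH =>
    obtain ⟨r, hrG, hr0, hmul⟩ := IH (fun s hs => hS s (Finset.mem_insert_of_mem hs))
    by_cases haz : a = 0
    · subst haz
      refine ⟨r, hrG, ?_, ?_⟩
      · rintro ⟨s, hs, hs0⟩
        rcases Finset.mem_insert.1 hs with rfl | hs'
        · exact absurd rfl hs0
        · exact hr0 ⟨s, hs', hs0⟩
      · intro s hs
        rcases Finset.mem_insert.1 hs with rfl | hs'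
        · exact ⟨0, by simp⟩
        · exact hmul s hs'
    · obtain ⟨r', hr'0, ⟨u, v, huv⟩, ⟨ma, hma⟩, ⟨mr, hmr⟩⟩ := aux_bezout a r haz
      have hr'G : r' ∈ G := by
        rw [huv]
        refine AddSubgroup.add_mem G ?_ ?_
        · simpa [zsmul_eq_mul] using G.zsmul_mem (hS a (Finset.mem_insert_self a S')) u
        · simpa [zsmul_eq_mul] using G.zsmul_mem hrG v
      refine ⟨r', hr'G, fun _ => hr'0, ?_⟩
      intro s hs
      rcases Finset.mem_insert.1 hs with rfl | hs'
      · exact ⟨ma, hma⟩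
      · obtain ⟨m, hm⟩ := hmul s hs'
        exact ⟨m * mr, by rw [hm, hmr]; push_cast; ring⟩

private lemma aux_main_q {G : AddSubgroup ℚ} (hG : ¬ IsAddCyclic G)
    (S : Finset ℚ) (hS : ∀ s ∈ S, s ∈ G) (hex : ∃ s ∈ S, s ≠ 0) :
    ∃ r : ℚ, r ∈ G ∧ 0 < r ∧ (∀ s ∈ S, ∃ m : ℤ, s = m * r) ∧
      (∀ s ∈ S, ∀ s' ∈ S, s ≠ s' → 3 * r ≤ |s - s'|) := by
  obtain ⟨r₀, hr₀G, hr₀0', hmul₀⟩ := aux_gcd_finset S hS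
  have hr₀0 : r₀ ≠ 0 := hr₀0' hex
  obtain ⟨r₁, hr₁G, hr₁0, m₁, hm₁, hm₁2⟩ := aux_div hG r₀ hr₀G hr₀0
  obtain ⟨r₂, hr₂G, hr₂0, m₂, hm₂, hm₂2⟩ := aux_div hG r₁ hr₁G hr₁0
  set r : ℚ := |r₂| with hrdef
  have hrpos : 0 < r := abs_pos.2 hr₂0
  have hrG : r ∈ G := by
    rcases abs_choice r₂ with h | h
    · rw [hrdef, h]; exact hr₂G
    · rw [hrdef, h]; exact G.neg_mem hr₂G
  set M : ℤ := m₁ * m₂ with hMdef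
  have hM4 : (4 : ℤ) ≤ |M| := by
    rw [hMdef, abs_mul]
    nlinarith [hm₁2, hm₂2]
  have key : ∀ s ∈ S, ∃ c : ℤ, s = (c * M : ℤ) * r₂ := by
    intro s hs
    obtain ⟨m, hm⟩ := hmul₀ s hs
    exact ⟨m, by rw [hm, hm₁, hm₂, hMdef]; push_cast; ring⟩
  refine ⟨r, hrG, hrpos, ?_, ?_⟩
  · intro s hs
    obtain ⟨c, hc⟩ := key s hs
    rcases abs_choice r₂ with h | h
    · exact ⟨c * M, by rw [hc, hrdef, h]⟩
    · refine ⟨-(c * M), ?_⟩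
      rw [hc, hrdef, h]
      push_cast
      ring
  · intro s hs s' hs' hne
    obtain ⟨c, hc⟩ := key s hs
    obtain ⟨c', hc'⟩ := key s' hs'
    have hcc : c ≠ c' := by
      rintro rfl
      exact hne (by rw [hc, hc'])
    have h1 : (1 : ℚ) ≤ |((c - c' : ℤ) : ℚ)| := by
      have : (1 : ℤ) ≤ |c - c'| := Int.one_le_abs (sub_ne_zero.2 hcc)
      rw [show |((c - c' : ℤ) : ℚ)| = ((|c - c'| : ℤ) : ℚ) by push_cast; rfl]
      exact_mod_cast this
    have h4 : (4 : ℚ) ≤ |(M : ℚ)| := by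
      rw [show |(M:ℚ)| = ((|M| : ℤ) : ℚ) by push_cast; rfl]
      exact_mod_cast hM4
    have hss : s - s' = ((c - c' : ℤ) : ℚ) * (M : ℚ) * r₂ := by
      rw [hc, hc']
      push_cast
      ring
    rw [hss, abs_mul, abs_mul, ← hrdef]
    have h44 : (4 : ℚ) ≤ |((c - c' : ℤ) : ℚ)| * |(M : ℚ)| := by
      nlinarith [abs_nonneg ((c - c' : ℤ) : ℚ), abs_nonneg ((M : ℤ) : ℚ)]
    nlinarith [mul_le_mul_of_nonneg_right h44 hrpos.le]


section
variable {F : Type*} [Field F] {G : AddSubgroup ℚ}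

private lemma aux_aeval_eq (r' : G) (q : Polynomial F) :
    Polynomial.aeval (AddMonoidAlgebra.single r' (1:F)) q
      = ∑ j ∈ q.support, AddMonoidAlgebra.single ((j • r' : G)) (q.coeff j) := by
  conv_lhs => rw [q.as_sum_support]
  rw [map_sum]
  refine Finset.sum_congr rfl fun j _ => ?_
  rw [aeval_monomial, AddMonoidAlgebra.single_pow, one_pow]
  rw [AddMonoidAlgebra.coe_algebraMap]
  simp only [Function.comp_apply, Algebra.algebraMap_self, RingHom.id_apply]
  rw [AddMonoidAlgebra.single_mul_single, zero_add, mul_one]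

private lemma aux_aeval_apply (r' : G) (hr' : (r' : ℚ) ≠ 0) (q : Polynomial F) (k : ℕ) :
    (Polynomial.aeval (AddMonoidAlgebra.single r' (1:F)) q : AddMonoidAlgebra F G).coeff (k • r')
      = q.coeff k := by
  classical
  have hinj : ∀ {j k : ℕ}, j • r' = k • r' → j = k := by
    intro j k h
    have : (j : ℚ) * (r' : ℚ) = (k : ℚ) * (r' : ℚ) := by
      have := congrArg (fun z : G => (z : ℚ)) h
      push_cast at this
      simpa [nsmul_eq_mul] using this
    exact_mod_cast mul_right_cancel₀ hr' this
  rw [aux_aeval_eq, AddMonoidAlgebra.coeff_sum, Finsupp.finset_sum_apply]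
  simp only [AddMonoidAlgebra.coeff_single]
  by_cases hk : k ∈ q.support
  · rw [Finset.sum_eq_single_of_mem k hk]
    · exact Finsupp.single_eq_same
    · intro j _ hjk
      exact Finsupp.single_eq_of_ne' fun h => hjk (hinj h)
  · rw [Finset.sum_eq_zero, eq_comm]
    · exact Polynomial.notMem_support_iff.1 hk
    · intro j hj
      exact Finsupp.single_eq_of_ne' fun h => hk (hinj h ▸ hj)

end

/-- A commutative ring (intended: an integral domain) is atomic if every nonzero nonunit
is a finite product of irreducible elements. -/
def AtomicDomain (A : Type*) [CommRing A] : Prop :=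
  ∀ a : A, a ≠ 0 → ¬ IsUnit a → ∃ l : Multiset A, (∀ x ∈ l, Irreducible x) ∧ l.prod = a

/-- A commutative ring satisfies the ACCP if every ascending chain of principal ideals
stabilizes. -/
def RingACCP (A : Type*) [CommRing A] : Prop :=
  ∀ f : ℕ → A, (∀ n, Ideal.span {f n} ≤ Ideal.span {f (n + 1)}) →
    ∃ N, ∀ n, N ≤ n → Ideal.span {f n} = Ideal.span {f N}

/-- If `F` is a field in which every irreducible polynomial has degree at
most `2` (e.g. a real closed field) and `G` is a non-cyclic additive subgroup of `ℚ`, then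
the group algebra `F[G]` is an antimatter domain. -/
theorem real_closed_group_algebra_antimatter (F : Type*) [Field F]
    (hF : ∀ f : Polynomial F, Irreducible f → f.degree ≤ 2)
    (G : AddSubgroup ℚ) (hG : ¬ IsAddCyclic G) :
    IsDomain (AddMonoidAlgebra F G) ∧
      ∀ a : AddMonoidAlgebra F G, ¬ Irreducible a := by
  classical
  refine ⟨NoZeroDivisors.to_isDomain _, ?_⟩
  intro a hirr
  by_cases ha0 : a = 0
  · exact not_irreducible_zero (ha0 ▸ hirr)
  by_cases hcard : a.coeff.support.card ≤ 1
  · -- `a` is a nonzero monomial, hence a unit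
    have h1 : a.coeff.support.card = 1 :=
      le_antisymm hcard (Finset.card_pos.2 (Finsupp.support_nonempty_iff.2 (by simpa using ha0)))
    obtain ⟨s, hc, hA⟩ := Finsupp.card_support_eq_one.1 h1
    refine hirr.not_isUnit ?_
    rw [← AddMonoidAlgebra.ofCoeff_coeff a, hA]
    refine isUnit_iff_exists_inv.2 ⟨AddMonoidAlgebra.single (-s) (a.coeff s)⁻¹, ?_⟩
    rw [show (AddMonoidAlgebra.ofCoeff (Finsupp.single s (a.coeff s)) : AddMonoidAlgebra F G)
        = AddMonoidAlgebra.single s (a.coeff s) from rfl,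
      AddMonoidAlgebra.single_mul_single, add_neg_cancel, mul_inv_cancel₀ hc,
      ← AddMonoidAlgebra.one_def]
  -- main case : at least two elements in the support
  have h2 : 1 < a.coeff.support.card := lt_of_not_ge hcard
  obtain ⟨x, hx, y, hy, hxy⟩ := Finset.one_lt_card.1 h2
  set S : Finset ℚ := a.coeff.support.image (fun z : G => (z : ℚ)) with hSdef
  have hSmem : ∀ s ∈ S, s ∈ G := by
    intro s hs
    obtain ⟨z, _, rfl⟩ := Finset.mem_image.1 hs
    exact z.2
  have hex : ∃ s ∈ S, s ≠ 0 := by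
    by_cases hx0 : (x : ℚ) = 0
    · refine ⟨(y : ℚ), Finset.mem_image_of_mem _ hy, fun h => hxy ?_⟩
      exact Subtype.ext (hx0.trans h.symm)
    · exact ⟨(x : ℚ), Finset.mem_image_of_mem _ hx, hx0⟩
  obtain ⟨r, hrG, hrpos, hmul, hwidth⟩ := aux_main_q hG S hSmem hex
  set r' : G := ⟨r, hrG⟩ with hr'def
  have hr'0 : (r' : ℚ) ≠ 0 := ne_of_gt hrpos
  have hm : ∀ s : G, s ∈ a.coeff.support → ∃ m : ℤ, (s : ℚ) = m * r :=
    fun s hs => hmul _ (Finset.mem_image_of_mem _ hs)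
  choose m hmspec using hm
  have hne : a.coeff.support.Nonempty := ⟨x, hx⟩
  set μ : G := a.coeff.support.min' hne with hμdef
  have hμmem : μ ∈ a.coeff.support := a.coeff.support.min'_mem hne
  set e : G → ℕ :=
    fun s => if hs : s ∈ a.coeff.support then (m s hs - m μ hμmem).toNat else 0 with hedef
  have hkey : ∀ s (hs : s ∈ a.coeff.support), (s : ℚ) = (μ : ℚ) + (e s : ℚ) * r := by
    intro s hs
    have hle : m μ hμmem ≤ m s hs := by
      have h1 : (μ : ℚ) ≤ (s : ℚ) := by exact_mod_cast a.coeff.support.min'_le s hs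
      rw [hmspec s hs, hmspec μ hμmem] at h1
      exact_mod_cast (mul_le_mul_iff_left₀ hrpos).1 h1
    have ht : ((m s hs - m μ hμmem).toNat : ℤ) = m s hs - m μ hμmem :=
      Int.toNat_of_nonneg (by omega)
    have ht' : (((m s hs - m μ hμmem).toNat : ℕ) : ℚ)
        = ((m s hs : ℤ) : ℚ) - ((m μ hμmem : ℤ) : ℚ) := by exact_mod_cast ht
    rw [hedef]
    dsimp only
    rw [dif_pos hs, ht', hmspec s hs, hmspec μ hμmem]
    ring
  have hemu : e μ = 0 := by
    rw [hedef]
    dsimp only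
    rw [dif_pos hμmem]
    omega
  have hcoe : ∀ s (hs : s ∈ a.coeff.support), μ + (e s) • r' = s := by
    intro s hs
    apply Subtype.ext
    have : ((μ + (e s) • r' : G) : ℚ) = (μ : ℚ) + (e s : ℚ) * r := by
      push_cast
      rw [nsmul_eq_mul]
    rw [this, ← hkey s hs]
  have heinj : ∀ s ∈ a.coeff.support, ∀ s' ∈ a.coeff.support, e s = e s' → s = s' := by
    intro s hs s' hs' h
    apply Subtype.ext
    rw [hkey s hs, hkey s' hs', h]
  set σ : G := a.coeff.support.max' hne with hσdef
  have hσmem : σ ∈ a.coeff.support := a.coeff.support.max'_mem hne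
  have hμσ : μ ≠ σ := (Finset.min'_lt_max' _ hx hy hxy).ne
  have h3e : 3 ≤ e σ := by
    have hw := hwidth (σ : ℚ) (Finset.mem_image_of_mem _ hσmem)
      (μ : ℚ) (Finset.mem_image_of_mem _ hμmem)
      (fun h => hμσ (Subtype.ext h).symm)
    have hd : (σ : ℚ) - (μ : ℚ) = (e σ : ℚ) * r := by rw [hkey σ hσmem]; ring
    rw [hd, abs_of_nonneg (mul_nonneg (Nat.cast_nonneg _) hrpos.le)] at hw
    have : (3 : ℚ) ≤ (e σ : ℚ) := (mul_le_mul_iff_left₀ hrpos).1 hw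
    exact_mod_cast this
  set p : Polynomial F := ∑ s ∈ a.coeff.support, Polynomial.C (a.coeff s) * Polynomial.X ^ (e s)
    with hpdef
  have hcoeff : ∀ s₀ ∈ a.coeff.support, p.coeff (e s₀) = a.coeff s₀ := by
    intro s₀ hs₀
    rw [hpdef, Polynomial.finset_sum_coeff, Finset.sum_eq_single_of_mem s₀ hs₀]
    · simp [Polynomial.coeff_C_mul, Polynomial.coeff_X_pow]
    · intro s hs hss
      simp only [Polynomial.coeff_C_mul, Polynomial.coeff_X_pow]
      rw [if_neg fun h => hss (heinj s hs s₀ hs₀ h.symm), mul_zero]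
  have hp0 : p ≠ 0 := fun h =>
    (Finsupp.mem_support_iff.1 hσmem)
      (by rw [← hcoeff σ hσmem, h, Polynomial.coeff_zero])
  have hpdeg : 3 ≤ p.natDegree :=
    le_trans h3e (Polynomial.le_natDegree_of_ne_zero
      (by rw [hcoeff σ hσmem]; exact Finsupp.mem_support_iff.1 hσmem))
  have hpc0 : p.coeff 0 ≠ 0 := by
    rw [show (0 : ℕ) = e μ from hemu.symm, hcoeff μ hμmem]
    exact Finsupp.mem_support_iff.1 hμmem
  have hpu : ¬ IsUnit p := by
    intro h
    have := Polynomial.natDegree_eq_zero_of_isUnit h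
    omega
  obtain ⟨qq, hqirr, hdvd⟩ := WfDvdMonoid.exists_irreducible_factor hpu hp0
  obtain ⟨w, hpw⟩ := hdvd
  have hq0 : qq ≠ 0 := hqirr.ne_zero
  have hw0 : w ≠ 0 := fun h => hp0 (by rw [hpw, h, mul_zero])
  have hqd2 : qq.natDegree ≤ 2 := Polynomial.natDegree_le_iff_degree_le.2 (hF qq hqirr)
  have hqd1 : qq.natDegree ≠ 0 := by
    intro h
    exact hqirr.not_isUnit (Polynomial.isUnit_iff_degree_eq_zero.2
      (by rw [Polynomial.degree_eq_natDegree hq0, h]; rfl))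
  have hwd1 : w.natDegree ≠ 0 := by
    have hnd := Polynomial.natDegree_mul hq0 hw0
    rw [← hpw] at hnd
    omega
  have hqc0 : qq.coeff 0 ≠ 0 ∧ w.coeff 0 ≠ 0 := by
    have hcz := Polynomial.mul_coeff_zero qq w
    rw [← hpw] at hcz
    constructor <;> (intro h; apply hpc0; rw [hcz, h]; ring)
  set t : AddMonoidAlgebra F G := AddMonoidAlgebra.single r' 1 with htdef
  have h1 : a = AddMonoidAlgebra.single μ 1 * Polynomial.aeval t p := by
    rw [htdef, aux_aeval_eq r' p, Finset.mul_sum]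
    have hsupp : p.support = a.coeff.support.image e := by
      apply Finset.Subset.antisymm
      · intro j hj
        by_contra hj'
        apply Polynomial.mem_support_iff.1 hj
        rw [hpdef, Polynomial.finset_sum_coeff]
        refine Finset.sum_eq_zero fun s hs => ?_
        simp only [Polynomial.coeff_C_mul, Polynomial.coeff_X_pow]
        rw [if_neg fun h => hj' (by rw [h]; exact Finset.mem_image_of_mem e hs), mul_zero]
      · intro j hj
        obtain ⟨s, hs, rfl⟩ := Finset.mem_image.1 hj
        rw [Polynomial.mem_support_iff, hcoeff s hs]
        exact Finsupp.mem_support_iff.1 hs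
    rw [hsupp, Finset.sum_image (fun s hs s' hs' h => heinj s hs s' hs' h)]
    have hrw : ∑ s ∈ a.coeff.support,
        AddMonoidAlgebra.single μ 1 * AddMonoidAlgebra.single ((e s) • r') (p.coeff (e s))
        = ∑ s ∈ a.coeff.support, AddMonoidAlgebra.single s (a.coeff s) :=
      Finset.sum_congr rfl fun s hs => by
        rw [AddMonoidAlgebra.single_mul_single, one_mul, hcoeff s hs, hcoe s hs]
    rw [hrw]
    exact (AddMonoidAlgebra.sum_coeff_single a).symm
  have hfact : a = (AddMonoidAlgebra.single μ 1 * Polynomial.aeval t qq)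
      * Polynomial.aeval t w := by
    rw [h1, hpw, map_mul, mul_assoc]
  have hnu : ∀ u : Polynomial F, u.natDegree ≠ 0 → u.coeff 0 ≠ 0 →
      ¬ IsUnit (Polynomial.aeval t u : AddMonoidAlgebra F G) := by
    intro u hud hu0
    refine aux_not_isUnit (x := (0 : G)) (y := u.natDegree • r') ?_ ?_ ?_
    · rw [Finsupp.mem_support_iff]
      have h0 := aux_aeval_apply r' hr'0 u 0
      rw [zero_smul] at h0
      rw [htdef, h0]
      exact hu0
    · rw [Finsupp.mem_support_iff, htdef, aux_aeval_apply r' hr'0 u u.natDegree,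
        Polynomial.coeff_natDegree]
      exact Polynomial.leadingCoeff_ne_zero.2 (fun h => hud (by rw [h]; simp))
    · intro h
      have hcast : (0 : ℚ) = (u.natDegree : ℚ) * r := by
        have hcg := congrArg (fun z : G => (z : ℚ)) h
        push_cast at hcg
        simpa only [nsmul_eq_mul, AddSubgroup.coe_nsmul, AddSubgroup.coe_zero] using hcg
      have : (u.natDegree : ℚ) ≠ 0 := Nat.cast_ne_zero.2 hud
      exact (mul_ne_zero this (ne_of_gt hrpos)) hcast.symm
  rcases hirr.isUnit_or_isUnit hfact with h | h
  · exact hnu qq hqd1 hqc0.1 (isUnit_of_mul_isUnit_right h)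
  · exact hnu w hwd1 hqc0.2 h
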